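/- arXiv:1410.6587 — 7 statements merged into one kernel-verified Lean document; each statement's English description precedes it below -/
import Mathlib

section
/- Let \Omega A be a differential calculus over an algebra A with integral forms I_k A = Hom_A(\Omega^k A, A) (right A-module maps), and let \nabla : I_1 A \to A be a divergence, i.e. \nabla(\phi \cdot a) = \nabla(\phi)a + \phi(da) for all \phi \in I_1 A, a \in A, where (\phi \cdot a)(\omega) = \phi(a\omega). Define \nabla_n : I_{n+1}A \to I_n A by \nabla_n(\phi)(\omega) = \nabla(\phi \cdot \omega) + (-1)^{n+1}\phi(d\omega), where (\phi\cdot\omega)(\omega') = \phi(\omega \wedge \omega'). Then for all \phi \in I_{m+n+1}A and \omega \in \Omega^m A, the Leibniz rule \nabla_n(\phi \cdot \omega) = \nabla_{m+n}(\phi)\cdot\omega + (-1)^{m+n}\phi \cdot d\omega holds. -/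
/-- the Leibniz rule for the extension of a divergence to higher
integral forms.  The differential graded algebra `Ω A` is modelled as a
ℂ-algebra `Ω` with graded components `G n` (with `G 0` playing the role of `A`),
a degree-one differential `d` satisfying the graded Leibniz rule, and a
divergence `∇ : I₁A → A` (defined on right `A`-linear maps).  Integral forms
`φ ∈ I_k A` are right `A`-linear maps, the action being `(φ·ω)(ω') = φ(ω ∧ ω')`,
i.e. `φ ∘ₗ mulLeft ω`.  The identity
`∇ₙ(φ·ω) = ∇_{m+n}(φ)·ω + (-1)^{m+n} φ·dω` is stated evaluated at an
arbitrary `ω' ∈ Ωⁿ A`, with `∇ₖ(ψ)(ω') = ∇(ψ·ω') + (-1)^{k+1} ψ(dω')`. -/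
theorem divergence_leibniz (Ω : Type*) [Ring Ω] [Algebra ℂ Ω]
    (G : ℕ → Submodule ℂ Ω)
    (hGmul : ∀ m n : ℕ, ∀ x ∈ G m, ∀ y ∈ G n, x * y ∈ G (m + n))
    (d : Ω →ₗ[ℂ] Ω)
    (hdG : ∀ n : ℕ, ∀ x ∈ G n, d x ∈ G (n + 1))
    (hLeib : ∀ m : ℕ, ∀ x ∈ G m, ∀ y : Ω,
      d (x * y) = d x * y + (-1 : ℂ) ^ m • (x * d y))
    (nabla : (Ω →ₗ[ℂ] Ω) → Ω)
    (hdiv : ∀ φ : Ω →ₗ[ℂ] Ω, (∀ x : Ω, ∀ a ∈ G 0, φ (x * a) = φ x * a) →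
      ∀ a ∈ G 0, nabla (φ ∘ₗ LinearMap.mulLeft ℂ a) = nabla φ * a + φ (d a))
    (m n : ℕ) (φ : Ω →ₗ[ℂ] Ω)
    (hφ : ∀ x : Ω, ∀ a ∈ G 0, φ (x * a) = φ x * a)
    (ω : Ω) (hω : ω ∈ G m) :
    ∀ ω' ∈ G n,
      nabla ((φ ∘ₗ LinearMap.mulLeft ℂ ω) ∘ₗ LinearMap.mulLeft ℂ ω')
          + (-1 : ℂ) ^ (n + 1) • φ (ω * d ω')
        = (nabla (φ ∘ₗ LinearMap.mulLeft ℂ (ω * ω'))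
            + (-1 : ℂ) ^ (m + n + 1) • φ (d (ω * ω')))
          + (-1 : ℂ) ^ (m + n) • φ (d ω * ω') := by
  intro ω' hω'
  have hcomp : (φ ∘ₗ LinearMap.mulLeft ℂ ω) ∘ₗ LinearMap.mulLeft ℂ ω'
      = φ ∘ₗ LinearMap.mulLeft ℂ (ω * ω') := by
    ext x; simp [LinearMap.mulLeft_apply, mul_assoc]
  have h1 : (-1:ℂ)^(m+n+1) * (-1:ℂ)^m = (-1:ℂ)^(n+1) := by
    rw [← pow_add]
    have : m + n + 1 + m = 2 * m + (n + 1) := by ring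
    rw [this, pow_add, pow_mul]; norm_num
  have h2 : (-1:ℂ)^(m+n+1) = -(-1:ℂ)^(m+n) := by rw [pow_succ]; ring
  rw [hcomp, hLeib m ω hω ω', map_add, map_smul, smul_add, smul_smul, h1, h2,
    neg_smul]
  abel
end

section
/- Every algebra automorphism \nu of A = C[x,y]/(xy) satisfies either (\nu(x) = ax and \nu(y) = by) or (\nu(x) = ay and \nu(y) = bx) for some nonzero complex scalars a, b. -/
/-- The algebra `A = ℂ[x,y]/(xy)`. -/
noncomputable def PillowBase : Type :=
  MvPolynomial (Fin 2) ℂ ⧸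
    Ideal.span {(MvPolynomial.X 0 * MvPolynomial.X 1 : MvPolynomial (Fin 2) ℂ)}

noncomputable instance : CommRing PillowBase :=
  inferInstanceAs (CommRing (MvPolynomial (Fin 2) ℂ ⧸ _))

noncomputable instance : Algebra ℂ PillowBase :=
  inferInstanceAs (Algebra ℂ (MvPolynomial (Fin 2) ℂ ⧸ _))

/-- The class of `x` in `ℂ[x,y]/(xy)`. -/
noncomputable def PillowBase.x : PillowBase :=
  Ideal.Quotient.mk _ (MvPolynomial.X 0)

/-- The class of `y` in `ℂ[x,y]/(xy)`. -/
noncomputable def PillowBase.y : PillowBase :=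
  Ideal.Quotient.mk _ (MvPolynomial.X 1)

namespace PillowAux

open MvPolynomial

noncomputable def J : Ideal (MvPolynomial (Fin 2) ℂ) :=
  Ideal.span {(MvPolynomial.X 0 * MvPolynomial.X 1 : MvPolynomial (Fin 2) ℂ)}

noncomputable def mkJ : MvPolynomial (Fin 2) ℂ →ₐ[ℂ] PillowBase :=
  Ideal.Quotient.mkₐ ℂ J

lemma mkJ_surj : Function.Surjective mkJ := by
  intro z
  obtain ⟨f, hf⟩ := Ideal.Quotient.mk_surjective (I := J) z
  exact ⟨f, hf⟩

lemma x_def : PillowBase.x = mkJ (X 0) := rfl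
lemma y_def : PillowBase.y = mkJ (X 1) := rfl

/-- set `y = 0` -/
noncomputable def px : PillowBase →ₐ[ℂ] Polynomial ℂ :=
  Ideal.Quotient.liftₐ J (MvPolynomial.aeval ![Polynomial.X, 0]) (by
    intro a ha
    rw [J, Ideal.mem_span_singleton] at ha
    obtain ⟨c, rfl⟩ := ha
    simp)

/-- set `x = 0` -/
noncomputable def py : PillowBase →ₐ[ℂ] Polynomial ℂ :=
  Ideal.Quotient.liftₐ J (MvPolynomial.aeval ![0, Polynomial.X]) (by
    intro a ha
    rw [J, Ideal.mem_span_singleton] at ha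
    obtain ⟨c, rfl⟩ := ha
    simp)

@[simp] lemma px_mk (f : MvPolynomial (Fin 2) ℂ) :
    px (mkJ f) = MvPolynomial.aeval ![Polynomial.X, 0] f := by
  simp only [px, mkJ, Ideal.Quotient.mkₐ_eq_mk, Ideal.Quotient.liftₐ_apply,
    Ideal.Quotient.lift_mk]
  rfl

@[simp] lemma py_mk (f : MvPolynomial (Fin 2) ℂ) :
    py (mkJ f) = MvPolynomial.aeval ![0, Polynomial.X] f := by
  simp only [py, mkJ, Ideal.Quotient.mkₐ_eq_mk, Ideal.Quotient.liftₐ_apply,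
    Ideal.Quotient.lift_mk]
  rfl

@[simp] lemma px_x : px PillowBase.x = Polynomial.X := by rw [x_def, px_mk]; simp
@[simp] lemma px_y : px PillowBase.y = 0 := by rw [y_def, px_mk]; simp
@[simp] lemma py_x : py PillowBase.x = 0 := by rw [x_def, py_mk]; simp
@[simp] lemma py_y : py PillowBase.y = Polynomial.X := by rw [y_def, py_mk]; simp

lemma coeff_eq_zero_of_px (f : MvPolynomial (Fin 2) ℂ)
    (h : MvPolynomial.aeval ![(Polynomial.X : Polynomial ℂ), 0] f = 0)
    (m : Fin 2 →₀ ℕ) (hm : m 1 = 0) : MvPolynomial.coeff m f = 0 := by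
  have h2 := congrArg (fun p => Polynomial.coeff p (m 0)) h
  simp only [Polynomial.coeff_zero] at h2
  rw [MvPolynomial.aeval_def, MvPolynomial.eval₂_eq' (algebraMap ℂ (Polynomial ℂ))
    ![Polynomial.X, 0] f, Polynomial.finset_sum_coeff] at h2
  rw [← h2]
  symm
  refine Eq.trans (Finset.sum_eq_single m ?_ ?_) ?_
  · intro b _ hbm
    by_cases hb1 : b 1 = 0
    · have hb0 : b 0 ≠ m 0 := by
        intro h0
        apply hbm
        ext i
        fin_cases i
        · exact h0
        · exact hb1.trans hm.symm
      rw [Fin.prod_univ_two]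
      simp only [Matrix.cons_val_zero, Matrix.cons_val_one, Matrix.head_cons, hb1, pow_zero,
        mul_one, Polynomial.algebraMap_eq]
      rw [Polynomial.coeff_C_mul, Polynomial.coeff_X_pow, if_neg (fun hh => hb0 hh.symm), mul_zero]
    · rw [Fin.prod_univ_two]
      simp [zero_pow hb1]
  · intro hmf
    rw [MvPolynomial.notMem_support_iff.mp hmf]
    simp
  · rw [Fin.prod_univ_two]
    simp only [Matrix.cons_val_zero, Matrix.cons_val_one, Matrix.head_cons, hm, pow_zero,
      mul_one, Polynomial.algebraMap_eq]
    rw [Polynomial.coeff_C_mul, Polynomial.coeff_X_pow, if_pos rfl, mul_one]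

lemma coeff_eq_zero_of_py (f : MvPolynomial (Fin 2) ℂ)
    (h : MvPolynomial.aeval ![0, (Polynomial.X : Polynomial ℂ)] f = 0)
    (m : Fin 2 →₀ ℕ) (hm : m 0 = 0) : MvPolynomial.coeff m f = 0 := by
  have h2 := congrArg (fun p => Polynomial.coeff p (m 1)) h
  simp only [Polynomial.coeff_zero] at h2
  rw [MvPolynomial.aeval_def, MvPolynomial.eval₂_eq' (algebraMap ℂ (Polynomial ℂ))
    ![0, Polynomial.X] f, Polynomial.finset_sum_coeff] at h2
  rw [← h2]
  symm
  refine Eq.trans (Finset.sum_eq_single m ?_ ?_) ?_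
  · intro b _ hbm
    by_cases hb0 : b 0 = 0
    · have hb1 : b 1 ≠ m 1 := by
        intro h1
        apply hbm
        ext i
        fin_cases i
        · exact hb0.trans hm.symm
        · exact h1
      rw [Fin.prod_univ_two]
      simp only [Matrix.cons_val_zero, Matrix.cons_val_one, Matrix.head_cons, hb0, pow_zero,
        one_mul, Polynomial.algebraMap_eq]
      rw [Polynomial.coeff_C_mul, Polynomial.coeff_X_pow, if_neg (fun hh => hb1 hh.symm), mul_zero]
    · rw [Fin.prod_univ_two]
      simp [zero_pow hb0]
  · intro hmf
    rw [MvPolynomial.notMem_support_iff.mp hmf]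
    simp
  · rw [Fin.prod_univ_two]
    simp only [Matrix.cons_val_zero, Matrix.cons_val_one, Matrix.head_cons, hm, pow_zero,
      one_mul, Polynomial.algebraMap_eq]
    rw [Polynomial.coeff_C_mul, Polynomial.coeff_X_pow, if_pos rfl, mul_one]

/-- joint injectivity of `px` and `py` -/
lemma eq_zero_of_px_py (z : PillowBase) (hx : px z = 0) (hy : py z = 0) : z = 0 := by
  obtain ⟨f, rfl⟩ := mkJ_surj z
  rw [px_mk] at hx
  rw [py_mk] at hy
  have hmem : f ∈ J := by
    rw [J, Ideal.mem_span_singleton]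
    have hXX : (X 0 * X 1 : MvPolynomial (Fin 2) ℂ)
        = MvPolynomial.monomial (Finsupp.single 0 1 + Finsupp.single 1 1) (1 : ℂ) := by
      rw [show (X 0 : MvPolynomial (Fin 2) ℂ) = MvPolynomial.monomial (Finsupp.single 0 1) 1
        from rfl, show (X 1 : MvPolynomial (Fin 2) ℂ)
        = MvPolynomial.monomial (Finsupp.single 1 1) 1 from rfl,
        MvPolynomial.monomial_mul, one_mul]
    rw [hXX, MvPolynomial.monomial_one_dvd_iff_modMonomial_eq_zero]
    ext s
    rw [MvPolynomial.coeff_zero]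
    by_cases hs : Finsupp.single (0 : Fin 2) 1 + Finsupp.single 1 1 ≤ s
    · rw [MvPolynomial.coeff_modMonomial_of_le _ hs]
    · rw [MvPolynomial.coeff_modMonomial_of_not_le _ hs]
      rw [Finsupp.le_def] at hs
      push_neg at hs
      obtain ⟨i, hi⟩ := hs
      fin_cases i
      · refine coeff_eq_zero_of_py f hy s ?_
        simp [Finsupp.single_apply] at hi
        omega
      · refine coeff_eq_zero_of_px f hx s ?_
        simp [Finsupp.single_apply] at hi
        omega
  show Ideal.Quotient.mk J f = 0
  rwa [Ideal.Quotient.eq_zero_iff_mem]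

lemma x_ne_zero : PillowBase.x ≠ 0 := by
  intro h
  have h2 := congrArg px h
  rw [px_x, map_zero] at h2
  exact Polynomial.X_ne_zero h2

lemma y_ne_zero : PillowBase.y ≠ 0 := by
  intro h
  have h2 := congrArg py h
  rw [py_y, map_zero] at h2
  exact Polynomial.X_ne_zero h2

/-- the two augmentations agree -/
lemma eval_zero_eq (z : PillowBase) : (px z).coeff 0 = (py z).coeff 0 := by
  obtain ⟨f, rfl⟩ := mkJ_surj z
  let E : Polynomial ℂ →ₐ[ℂ] ℂ := Polynomial.aeval 0
  have key : ((E.comp px).comp mkJ) = ((E.comp py).comp mkJ) := by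
    apply MvPolynomial.algHom_ext
    intro i
    fin_cases i <;>
      simp [E, AlgHom.comp_apply, ← x_def, ← y_def]
  have h2 := DFunLike.congr_fun key f
  simp only [AlgHom.comp_apply] at h2
  simpa [E, Polynomial.coe_aeval_eq_eval, Polynomial.coeff_zero_eq_eval_zero] using h2

lemma adjoin_xy : Algebra.adjoin ℂ {PillowBase.x, PillowBase.y} = ⊤ := by
  rw [eq_top_iff]
  rintro z -
  obtain ⟨f, rfl⟩ := mkJ_surj z
  have hf : f ∈ Algebra.adjoin ℂ (Set.range (X : Fin 2 → MvPolynomial (Fin 2) ℂ)) := by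
    rw [MvPolynomial.adjoin_range_X]; trivial
  have h1 : mkJ f ∈ Subalgebra.map mkJ (Algebra.adjoin ℂ (Set.range X)) :=
    ⟨f, hf, rfl⟩
  rw [AlgHom.map_adjoin] at h1
  refine Algebra.adjoin_mono ?_ h1
  rintro - ⟨-, ⟨i, rfl⟩, rfl⟩
  fin_cases i
  · exact Or.inl (x_def).symm
  · exact Or.inr (y_def).symm

lemma mem_adjoin_uv (ν : PillowBase ≃ₐ[ℂ] PillowBase) (z : PillowBase) :
    z ∈ Algebra.adjoin ℂ {ν PillowBase.x, ν PillowBase.y} := by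
  have h1 : ν.symm z ∈ Algebra.adjoin ℂ {PillowBase.x, PillowBase.y} := by
    rw [adjoin_xy]; trivial
  have h2 : z ∈ Subalgebra.map (ν : PillowBase →ₐ[ℂ] PillowBase)
      (Algebra.adjoin ℂ {PillowBase.x, PillowBase.y}) :=
    ⟨ν.symm z, h1, ν.apply_symm_apply z⟩
  rw [AlgHom.map_adjoin] at h2
  rwa [show (ν : PillowBase →ₐ[ℂ] PillowBase) '' {PillowBase.x, PillowBase.y}
      = {ν PillowBase.x, ν PillowBase.y} from Set.image_pair _ _ _] at h2

lemma adjoin_pair_zero_right (p : Polynomial ℂ) :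
    Algebra.adjoin ℂ ({p, 0} : Set (Polynomial ℂ)) ≤ Algebra.adjoin ℂ {p} := by
  apply Algebra.adjoin_le
  rintro t (rfl | rfl)
  · exact Algebra.subset_adjoin rfl
  · exact Subalgebra.zero_mem _

lemma adjoin_pair_zero_left (p : Polynomial ℂ) :
    Algebra.adjoin ℂ ({0, p} : Set (Polynomial ℂ)) ≤ Algebra.adjoin ℂ {p} := by
  apply Algebra.adjoin_le
  rintro t (rfl | rfl)
  · exact Subalgebra.zero_mem _
  · exact Algebra.subset_adjoin rfl

/-- degree argument: if `X ∈ ℂ[P]` and `P(0) = 0` then `P = aX`, `a ≠ 0`. -/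
lemma scalar_of_X_mem (P : Polynomial ℂ) (h0 : P.coeff 0 = 0)
    (hmem : (Polynomial.X : Polynomial ℂ) ∈ Algebra.adjoin ℂ {P}) :
    ∃ a : ℂ, a ≠ 0 ∧ P = Polynomial.C a * Polynomial.X := by
  rw [Algebra.adjoin_singleton_eq_range_aeval] at hmem
  obtain ⟨F, hF⟩ := hmem
  have hc : F.comp P = Polynomial.X := by rw [Polynomial.comp_eq_aeval]; exact hF
  have hdeg := congrArg Polynomial.natDegree hc
  rw [Polynomial.natDegree_comp, Polynomial.natDegree_X] at hdeg
  have hP1 : P.natDegree = 1 := Nat.dvd_one.mp (Dvd.intro_left _ hdeg)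
  have hPne : P ≠ 0 := by
    intro h
    rw [h, Polynomial.natDegree_zero] at hP1
    exact one_ne_zero hP1.symm
  refine ⟨P.coeff 1, ?_, ?_⟩
  · have hl := Polynomial.leadingCoeff_ne_zero.mpr hPne
    rwa [Polynomial.leadingCoeff, hP1] at hl
  · have he := Polynomial.eq_X_add_C_of_natDegree_le_one (le_of_eq hP1)
    rwa [h0, map_zero, add_zero] at he

lemma eq_smul_x (z : PillowBase) (a : ℂ)
    (h1 : px z = Polynomial.C a * Polynomial.X) (h2 : py z = 0) :
    z = a • PillowBase.x := by
  have h := eq_zero_of_px_py (z - a • PillowBase.x) ?_ ?_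
  · rwa [sub_eq_zero] at h
  · rw [map_sub, map_smul, px_x, h1, Polynomial.smul_eq_C_mul, sub_self]
  · rw [map_sub, map_smul, py_x, h2, smul_zero, sub_self]

lemma eq_smul_y (z : PillowBase) (a : ℂ)
    (h1 : py z = Polynomial.C a * Polynomial.X) (h2 : px z = 0) :
    z = a • PillowBase.y := by
  have h := eq_zero_of_px_py (z - a • PillowBase.y) ?_ ?_
  · rwa [sub_eq_zero] at h
  · rw [map_sub, map_smul, px_y, h2, smul_zero, sub_self]
  · rw [map_sub, map_smul, py_y, h1, Polynomial.smul_eq_C_mul, sub_self]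

lemma X_mem_px_adjoin (ν : PillowBase ≃ₐ[ℂ] PillowBase) :
    (Polynomial.X : Polynomial ℂ) ∈
      Algebra.adjoin ℂ {px (ν PillowBase.x), px (ν PillowBase.y)} := by
  have h := mem_adjoin_uv ν PillowBase.x
  have h2 : px PillowBase.x ∈
      Subalgebra.map px (Algebra.adjoin ℂ {ν PillowBase.x, ν PillowBase.y}) :=
    ⟨PillowBase.x, h, rfl⟩
  rw [AlgHom.map_adjoin, Set.image_pair] at h2
  rwa [px_x] at h2

lemma X_mem_py_adjoin (ν : PillowBase ≃ₐ[ℂ] PillowBase) :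
    (Polynomial.X : Polynomial ℂ) ∈
      Algebra.adjoin ℂ {py (ν PillowBase.x), py (ν PillowBase.y)} := by
  have h := mem_adjoin_uv ν PillowBase.y
  have h2 : py PillowBase.y ∈
      Subalgebra.map py (Algebra.adjoin ℂ {ν PillowBase.x, ν PillowBase.y}) :=
    ⟨PillowBase.y, h, rfl⟩
  rw [AlgHom.map_adjoin, Set.image_pair] at h2
  rwa [py_y] at h2

end PillowAux

open PillowAux in
/-- every algebra automorphism of `ℂ[x,y]/(xy)` either rescales
`x` and `y`, or swaps them up to nonzero scalars. -/
theorem pillowBase_automorphisms (ν : PillowBase ≃ₐ[ℂ] PillowBase) :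
    ∃ a b : ℂ, a ≠ 0 ∧ b ≠ 0 ∧
      ((ν PillowBase.x = a • PillowBase.x ∧ ν PillowBase.y = b • PillowBase.y) ∨
       (ν PillowBase.x = a • PillowBase.y ∧ ν PillowBase.y = b • PillowBase.x)) := by
  have hxy0 : PillowBase.x * PillowBase.y = 0 := by
    show (Ideal.Quotient.mk J) (MvPolynomial.X 0) * (Ideal.Quotient.mk J) (MvPolynomial.X 1) = 0
    rw [← map_mul, Ideal.Quotient.eq_zero_iff_mem]
    exact Ideal.subset_span rfl
  have huv : ν PillowBase.x * ν PillowBase.y = 0 := by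
    rw [← map_mul, hxy0, map_zero]
  have hune : ν PillowBase.x ≠ 0 := by
    intro h
    exact x_ne_zero (ν.injective (by rw [h, map_zero]))
  have hvne : ν PillowBase.y ≠ 0 := by
    intro h
    exact y_ne_zero (ν.injective (by rw [h, map_zero]))
  have hP : px (ν PillowBase.x) * px (ν PillowBase.y) = 0 := by
    rw [← map_mul, huv, map_zero]
  have hQ : py (ν PillowBase.x) * py (ν PillowBase.y) = 0 := by
    rw [← map_mul, huv, map_zero]
  rcases mul_eq_zero.mp hP with hP0 | hR0
  · rcases mul_eq_zero.mp hQ with hQ0 | hS0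
    · exact absurd (eq_zero_of_px_py _ hP0 hQ0) hune
    · -- swap case: ν x pure y, ν y pure x
      have hQ00 : (py (ν PillowBase.x)).coeff 0 = 0 := by
        rw [← eval_zero_eq, hP0, Polynomial.coeff_zero]
      have hR00 : (px (ν PillowBase.y)).coeff 0 = 0 := by
        rw [eval_zero_eq, hS0, Polynomial.coeff_zero]
      have hmemy : (Polynomial.X : Polynomial ℂ) ∈
          Algebra.adjoin ℂ {py (ν PillowBase.x)} := by
        have h := X_mem_py_adjoin ν
        rw [hS0] at h
        exact adjoin_pair_zero_right _ h
      have hmemx : (Polynomial.X : Polynomial ℂ) ∈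
          Algebra.adjoin ℂ {px (ν PillowBase.y)} := by
        have h := X_mem_px_adjoin ν
        rw [hP0] at h
        exact adjoin_pair_zero_left _ h
      obtain ⟨a, ha, haeq⟩ := scalar_of_X_mem _ hQ00 hmemy
      obtain ⟨b, hb, hbeq⟩ := scalar_of_X_mem _ hR00 hmemx
      exact ⟨a, b, ha, hb, Or.inr ⟨eq_smul_y _ a haeq hP0, eq_smul_x _ b hbeq hS0⟩⟩
  · rcases mul_eq_zero.mp hQ with hQ0 | hS0
    · -- diagonal case: ν x pure x, ν y pure y
      have hP00 : (px (ν PillowBase.x)).coeff 0 = 0 := by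
        rw [eval_zero_eq, hQ0, Polynomial.coeff_zero]
      have hS00 : (py (ν PillowBase.y)).coeff 0 = 0 := by
        rw [← eval_zero_eq, hR0, Polynomial.coeff_zero]
      have hmemx : (Polynomial.X : Polynomial ℂ) ∈
          Algebra.adjoin ℂ {px (ν PillowBase.x)} := by
        have h := X_mem_px_adjoin ν
        rw [hR0] at h
        exact adjoin_pair_zero_right _ h
      have hmemy : (Polynomial.X : Polynomial ℂ) ∈
          Algebra.adjoin ℂ {py (ν PillowBase.y)} := by
        have h := X_mem_py_adjoin ν
        rw [hQ0] at h
        exact adjoin_pair_zero_left _ h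
      obtain ⟨a, ha, haeq⟩ := scalar_of_X_mem _ hP00 hmemx
      obtain ⟨b, hb, hbeq⟩ := scalar_of_X_mem _ hS00 hmemy
      exact ⟨a, b, ha, hb, Or.inl ⟨eq_smul_x _ a haeq hQ0, eq_smul_y _ b hbeq hR0⟩⟩
    · exact absurd (eq_zero_of_px_py _ hR0 hS0) hvne
end

section
/- In the noncommutative torus algebra with unitaries V, W satisfying VW = \lambda WV, the elements x = V+V*, y = W+W*, z = VW*+V*W satisfy xz - \bar\lambda zx = (1 - \bar\lambda^2) y and zy - \bar\lambda yz = (1 - \bar\lambda^2) x, where \bar\lambda = \lambda^{-1}. -/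
/-- in the noncommutative torus algebra (unitaries `V, W` with
`VW = λ WV`, `λ = e^{2πiθ}`), the elements `x = V+V*`, `y = W+W*`,
`z = VW* + V*W` satisfy `xz - λ̄ zx = (1-λ̄²) y` and `zy - λ̄ yz = (1-λ̄²) x`,
where `λ̄ = λ⁻¹`. -/
theorem ncTorus_xz_zy_relations (A : Type*) [Ring A] [Algebra ℂ A] (θ : ℝ) (lam : ℂ)
    (hlam : lam = Complex.exp (2 * Real.pi * θ * Complex.I))
    (V Vs W Ws : A)
    (hVVs : V * Vs = 1) (hVsV : Vs * V = 1)
    (hWWs : W * Ws = 1) (hWsW : Ws * W = 1)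
    (hcomm : V * W = lam • (W * V)) :
    ((V + Vs) * (V * Ws + Vs * W) - lam⁻¹ • ((V * Ws + Vs * W) * (V + Vs))
        = (1 - lam⁻¹ ^ 2) • (W + Ws)) ∧
    ((V * Ws + Vs * W) * (W + Ws) - lam⁻¹ • ((W + Ws) * (V * Ws + Vs * W))
        = (1 - lam⁻¹ ^ 2) • (V + Vs)) := by
  have hlam0 : lam ≠ 0 := by rw [hlam]; exact Complex.exp_ne_zero _
  set μ := lam⁻¹ with hμdef
  have hμl : μ * lam = 1 := inv_mul_cancel₀ hlam0
  have hlμ : lam * μ = 1 := mul_inv_cancel₀ hlam0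
  have hWV : W * V = μ • (V * W) := by
    rw [hcomm, smul_smul, hμl, one_smul]
  have hWsV : Ws * V = lam • (V * Ws) := by
    calc Ws * V = Ws * (V * W) * Ws := by
          rw [show Ws * (V * W) * Ws = Ws * V * (W * Ws) by noncomm_ring, hWWs, mul_one]
      _ = lam • (Ws * (W * V) * Ws) := by rw [hcomm, mul_smul_comm, smul_mul_assoc]
      _ = lam • (V * Ws) := by
          rw [show Ws * (W * V) * Ws = (Ws * W) * (V * Ws) by noncomm_ring, hWsW, one_mul]
  have hWVs : W * Vs = lam • (Vs * W) := by
    calc W * Vs = Vs * (V * W) * Vs := by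
          rw [show Vs * (V * W) * Vs = (Vs * V) * (W * Vs) by noncomm_ring, hVsV, one_mul]
      _ = lam • (Vs * (W * V) * Vs) := by rw [hcomm, mul_smul_comm, smul_mul_assoc]
      _ = lam • (Vs * W) := by
          rw [show Vs * (W * V) * Vs = Vs * W * (V * Vs) by noncomm_ring, hVVs, mul_one]
  have hWsVs : Ws * Vs = μ • (Vs * Ws) := by
    have h : Vs * Ws = lam • (Ws * Vs) := by
      calc Vs * Ws = Vs * (Ws * V) * Vs := by
            rw [show Vs * (Ws * V) * Vs = Vs * Ws * (V * Vs) by noncomm_ring, hVVs, mul_one]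
        _ = lam • (Vs * (V * Ws) * Vs) := by rw [hWsV, mul_smul_comm, smul_mul_assoc]
        _ = lam • (Ws * Vs) := by
            rw [show Vs * (V * Ws) * Vs = (Vs * V) * (Ws * Vs) by noncomm_ring, hVsV, one_mul]
    rw [h, smul_smul, hμl, one_smul]
  constructor
  · have e1 : (V + Vs) * (V * Ws + Vs * W) = V * V * Ws + W + Ws + Vs * Vs * W := by
      have h1 : V * (Vs * W) = W := by rw [← mul_assoc, hVVs, one_mul]
      have h2 : Vs * (V * Ws) = Ws := by rw [← mul_assoc, hVsV, one_mul]
      rw [add_mul, mul_add, mul_add, h1, h2, ← mul_assoc, ← mul_assoc]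
      abel
    have e2 : (V * Ws + Vs * W) * (V + Vs)
        = lam • (V * V * Ws) + μ • Ws + μ • W + lam • (Vs * Vs * W) := by
      have h1 : V * Ws * V = lam • (V * V * Ws) := by
        rw [mul_assoc, hWsV, mul_smul_comm, ← mul_assoc]
      have h2 : V * Ws * Vs = μ • Ws := by
        rw [mul_assoc, hWsVs, mul_smul_comm, ← mul_assoc, hVVs, one_mul]
      have h3 : Vs * W * V = μ • W := by
        rw [mul_assoc, hWV, mul_smul_comm, ← mul_assoc, hVsV, one_mul]
      have h4 : Vs * W * Vs = lam • (Vs * Vs * W) := by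
        rw [mul_assoc, hWVs, mul_smul_comm, ← mul_assoc]
      rw [add_mul, mul_add, mul_add, h1, h2, h3, h4]
      abel
    rw [e1, e2]
    rw [smul_add, smul_add, smul_add, smul_smul, smul_smul, smul_smul, smul_smul, hμl]
    rw [show μ * μ = μ ^ 2 by ring]
    module
  · have e1 : (V * Ws + Vs * W) * (W + Ws) = V + V * Ws * Ws + Vs * W * W + Vs := by
      have h1 : V * Ws * W = V := by rw [mul_assoc, hWsW, mul_one]
      have h2 : Vs * W * Ws = Vs := by rw [mul_assoc, hWWs, mul_one]
      rw [add_mul, mul_add, mul_add, h1, h2]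
      abel
    have e2 : (W + Ws) * (V * Ws + Vs * W)
        = μ • V + lam • (V * Ws * Ws) + lam • (Vs * W * W) + μ • Vs := by
      have h1 : W * (V * Ws) = μ • V := by
        rw [← mul_assoc, hWV, smul_mul_assoc, mul_assoc, hWWs, mul_one]
      have h2 : W * (Vs * W) = lam • (Vs * W * W) := by
        rw [← mul_assoc, hWVs, smul_mul_assoc]
      have h3 : Ws * (V * Ws) = lam • (V * Ws * Ws) := by
        rw [← mul_assoc, hWsV, smul_mul_assoc]
      have h4 : Ws * (Vs * W) = μ • Vs := by
        rw [← mul_assoc, hWsVs, smul_mul_assoc, mul_assoc, hWsW, mul_one]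
      rw [add_mul, mul_add, mul_add, h1, h2, h3, h4]
      abel
    rw [e1, e2]
    rw [smul_add, smul_add, smul_add, smul_smul, smul_smul, smul_smul, smul_smul, hμl]
    rw [show μ * μ = μ ^ 2 by ring]
    module
end

section
/- In the noncommutative torus algebra with unitaries V, W satisfying VW = \lambda WV, the elements x = V+V*, y = W+W*, z = VW*+V*W satisfy x^2 + y^2 + \bar\lambda z^2 - xzy = 2(1 + \bar\lambda^2), where \bar\lambda = \lambda^{-1}. -/
/-- in the noncommutative torus algebra (unitaries `V, W` with
`VW = λ WV`, `λ = e^{2πiθ}`), the elements `x = V+V*`, `y = W+W*`,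
`z = VW* + V*W` satisfy `x² + y² + λ̄ z² - xzy = 2(1+λ̄²)`, `λ̄ = λ⁻¹`. -/
theorem ncTorus_sphere_relation (A : Type*) [Ring A] [Algebra ℂ A] (θ : ℝ) (lam : ℂ)
    (hlam : lam = Complex.exp (2 * Real.pi * θ * Complex.I))
    (V Vs W Ws : A)
    (hVVs : V * Vs = 1) (hVsV : Vs * V = 1)
    (hWWs : W * Ws = 1) (hWsW : Ws * W = 1)
    (hcomm : V * W = lam • (W * V)) :
    (V + Vs) ^ 2 + (W + Ws) ^ 2 + lam⁻¹ • (V * Ws + Vs * W) ^ 2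
        - (V + Vs) * (V * Ws + Vs * W) * (W + Ws)
      = (2 * (1 + lam⁻¹ ^ 2)) • (1 : A) := by
  have hlam0 : lam ≠ 0 := by rw [hlam]; exact Complex.exp_ne_zero _
  have hinv : lam⁻¹ * lam = 1 := inv_mul_cancel₀ hlam0
  have hinv' : lam * lam⁻¹ = 1 := mul_inv_cancel₀ hlam0
  -- cancellation lemmas in right-assoc form
  have cVVs : ∀ a : A, V * (Vs * a) = a := fun a => by rw [← mul_assoc, hVVs, one_mul]
  have cVsV : ∀ a : A, Vs * (V * a) = a := fun a => by rw [← mul_assoc, hVsV, one_mul]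
  have cWWs : ∀ a : A, W * (Ws * a) = a := fun a => by rw [← mul_assoc, hWWs, one_mul]
  have cWsW : ∀ a : A, Ws * (W * a) = a := fun a => by rw [← mul_assoc, hWsW, one_mul]
  -- derived commutation relations
  have hWV : W * V = lam⁻¹ • (V * W) := by
    rw [hcomm, smul_smul, hinv, one_smul]
  have hWsV : Ws * V = lam • (V * Ws) := by
    have h := congrArg (fun a => Ws * a * Ws) hcomm
    simpa [mul_assoc, cWWs, cWsW, hWWs, hWsW, mul_one, mul_smul_comm, smul_mul_assoc] using h
  have hWVs : W * Vs = lam • (Vs * W) := by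
    have h := congrArg (fun a => Vs * a * Vs) hcomm
    simpa [mul_assoc, cVVs, cVsV, hVVs, hVsV, mul_one, mul_smul_comm, smul_mul_assoc] using h
  have hWsVs : Ws * Vs = lam⁻¹ • (Vs * Ws) := by
    have h := congrArg (fun a => Vs * a * Vs) hWsV
    have h' : Vs * Ws = lam • (Ws * Vs) := by
      simpa [mul_assoc, cVVs, cVsV, hVVs, hVsV, mul_one, mul_smul_comm, smul_mul_assoc] using h
    rw [h', smul_smul, hinv, one_smul]
  -- commutation in right-assoc form
  have cWV : ∀ a : A, W * (V * a) = lam⁻¹ • (V * (W * a)) := fun a => by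
    rw [← mul_assoc, hWV, smul_mul_assoc, mul_assoc]
  have cWsV : ∀ a : A, Ws * (V * a) = lam • (V * (Ws * a)) := fun a => by
    rw [← mul_assoc, hWsV, smul_mul_assoc, mul_assoc]
  have cWVs : ∀ a : A, W * (Vs * a) = lam • (Vs * (W * a)) := fun a => by
    rw [← mul_assoc, hWVs, smul_mul_assoc, mul_assoc]
  have cWsVs : ∀ a : A, Ws * (Vs * a) = lam⁻¹ • (Vs * (Ws * a)) := fun a => by
    rw [← mul_assoc, hWsVs, smul_mul_assoc, mul_assoc]
  simp only [pow_two, mul_add, add_mul, sub_mul, smul_add, mul_assoc, smul_mul_assoc,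
    mul_smul_comm, smul_smul, cVVs, cVsV, cWWs, cWsW, hWV, hWsV, hWVs, hWsVs,
    cWV, cWsV, cWVs, cWsVs, hVVs, hVsV, hWWs, hWsW, mul_one, one_mul,
    hinv, hinv', one_smul]
  module
end

section
/- In the noncommutative torus algebra with unitaries V, W satisfying VW = \lambda WV, the elements \hat{x} = V - V*, \hat{y} = W - W*, \hat{z} = VW* - V*W satisfy \hat{x}^2 + \hat{y}^2 - \bar\lambda \hat{z}^2 - \hat{x} z \hat{y} = 2(\bar\lambda^2 - 1), where z = VW* + V*W and \bar\lambda = \lambda^{-1}. -/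
/-- in the noncommutative torus algebra (unitaries `V, W` with
`VW = λ WV`, `λ = e^{2πiθ}`), the elements `x̂ = V-V*`, `ŷ = W-W*`,
`ẑ = VW* - V*W` satisfy `x̂² + ŷ² - λ̄ ẑ² - x̂ z ŷ = 2(λ̄² - 1)`, where
`z = VW* + V*W` and `λ̄ = λ⁻¹`. -/
theorem ncTorus_hat_sphere_relation (A : Type*) [Ring A] [Algebra ℂ A] (θ : ℝ) (lam : ℂ)
    (hlam : lam = Complex.exp (2 * Real.pi * θ * Complex.I))
    (V Vs W Ws : A)
    (hVVs : V * Vs = 1) (hVsV : Vs * V = 1)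
    (hWWs : W * Ws = 1) (hWsW : Ws * W = 1)
    (hcomm : V * W = lam • (W * V)) :
    (V - Vs) ^ 2 + (W - Ws) ^ 2 - lam⁻¹ • (V * Ws - Vs * W) ^ 2
        - (V - Vs) * (V * Ws + Vs * W) * (W - Ws)
      = (2 * (lam⁻¹ ^ 2 - 1)) • (1 : A) := by
  have hlam0 : lam ≠ 0 := by rw [hlam]; exact Complex.exp_ne_zero _
  have hinv : lam⁻¹ * lam = 1 := inv_mul_cancel₀ hlam0
  have hinv2 : lam * lam⁻¹ = 1 := mul_inv_cancel₀ hlam0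
  have hWsV : Ws * V = lam • (V * Ws) := by
    have h := congrArg (fun a => Ws * a * Ws) hcomm
    simp only [mul_smul_comm, smul_mul_assoc] at h
    calc Ws * V = Ws * (V * (W * Ws)) := by rw [hWWs, mul_one]
    _ = Ws * (V * W) * Ws := by rw [mul_assoc, mul_assoc]
    _ = lam • (Ws * (W * V) * Ws) := h
    _ = lam • (V * Ws) := by rw [← mul_assoc, hWsW, one_mul]
  have hWVs : W * Vs = lam • (Vs * W) := by
    have h := congrArg (fun a => Vs * a * Vs) hcomm
    simp only [mul_smul_comm, smul_mul_assoc] at h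
    calc W * Vs = Vs * (V * W) * Vs := by rw [← mul_assoc, hVsV, one_mul]
    _ = lam • (Vs * (W * V) * Vs) := h
    _ = lam • (Vs * (W * (V * Vs))) := by rw [mul_assoc, mul_assoc]
    _ = lam • (Vs * W) := by rw [hVVs, mul_one]
  have hVsWs : Vs * Ws = lam • (Ws * Vs) := by
    have h := congrArg (fun a => Ws * a * Ws) hWVs
    simp only [mul_smul_comm, smul_mul_assoc] at h
    calc Vs * Ws = Ws * (W * Vs) * Ws := by rw [← mul_assoc, hWsW, one_mul]
    _ = lam • (Ws * (Vs * W) * Ws) := h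
    _ = lam • (Ws * (Vs * (W * Ws))) := by rw [mul_assoc, mul_assoc]
    _ = lam • (Ws * Vs) := by rw [hWWs, mul_one]
  have hWsVs : Ws * Vs = lam⁻¹ • (Vs * Ws) := by
    rw [hVsWs, smul_smul, hinv, one_smul]
  have hWV : W * V = lam⁻¹ • (V * W) := by
    rw [hcomm, smul_smul, hinv, one_smul]
  -- right-associated versions
  have cWsV : ∀ x : A, Ws * (V * x) = lam • (V * (Ws * x)) := fun x => by
    rw [← mul_assoc, hWsV, smul_mul_assoc, mul_assoc]
  have cWVs : ∀ x : A, W * (Vs * x) = lam • (Vs * (W * x)) := fun x => by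
    rw [← mul_assoc, hWVs, smul_mul_assoc, mul_assoc]
  have cWsVs : ∀ x : A, Ws * (Vs * x) = lam⁻¹ • (Vs * (Ws * x)) := fun x => by
    rw [← mul_assoc, hWsVs, smul_mul_assoc, mul_assoc]
  have cWV : ∀ x : A, W * (V * x) = lam⁻¹ • (V * (W * x)) := fun x => by
    rw [← mul_assoc, hWV, smul_mul_assoc, mul_assoc]
  have hVVs' : ∀ x : A, V * (Vs * x) = x := fun x => by rw [← mul_assoc, hVVs, one_mul]
  have hVsV' : ∀ x : A, Vs * (V * x) = x := fun x => by rw [← mul_assoc, hVsV, one_mul]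
  have hWWs' : ∀ x : A, W * (Ws * x) = x := fun x => by rw [← mul_assoc, hWWs, one_mul]
  have hWsW' : ∀ x : A, Ws * (W * x) = x := fun x => by rw [← mul_assoc, hWsW, one_mul]
  simp only [sq, sub_mul, mul_sub, add_mul, mul_add, smul_sub, smul_add, mul_assoc,
    mul_smul_comm, smul_mul_assoc, smul_smul, cWsV, cWVs, cWsVs, cWV,
    hVVs', hVsV', hWWs', hWsW', hVVs, hVsV, hWWs, hWsW, mul_one, one_mul,
    hinv, hinv2, one_smul]
  module
end

section
/- The elements x_-hat = V - V*, y-hat = W - W*, z-hat = VW* - V*W generate the (-1)-eigenspace O(T^2_\theta)_- of the involution \sigma (V \mapsto V*, W \mapsto W*) as a left module over the fixed-point subalgebra O(P_\theta) = O(T^2_\theta)_+. -/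
section NCAux
variable {A : Type*} [Ring A] [Algebra ℂ A] (V Vs W Ws : A)

/-- auxiliary predicate: `a` is a left combination of the three odd generators
with coefficients in the pillow algebra. -/
def NCGen (a : A) : Prop :=
  ∃ p q r : A,
    p ∈ Algebra.adjoin ℂ ({V + Vs, W + Ws} : Set A) ∧
    q ∈ Algebra.adjoin ℂ ({V + Vs, W + Ws} : Set A) ∧
    r ∈ Algebra.adjoin ℂ ({V + Vs, W + Ws} : Set A) ∧
    a = p * (V - Vs) + q * (W - Ws) + r * (V * Ws - Vs * W)

variable {V Vs W Ws}

theorem NCGen.zero : NCGen V Vs W Ws 0 :=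
  ⟨0, 0, 0, zero_mem _, zero_mem _, zero_mem _, by simp⟩

theorem NCGen.sub {a b : A} (ha : NCGen V Vs W Ws a) (hb : NCGen V Vs W Ws b) :
    NCGen V Vs W Ws (a - b) := by
  obtain ⟨p, q, r, hp, hq, hr, he⟩ := ha
  obtain ⟨p', q', r', hp', hq', hr', he'⟩ := hb
  exact ⟨p - p', q - q', r - r', sub_mem hp hp', sub_mem hq hq', sub_mem hr hr',
    by rw [he, he']; noncomm_ring⟩

theorem NCGen.smul (c : ℂ) {a : A} (ha : NCGen V Vs W Ws a) :
    NCGen V Vs W Ws (c • a) := by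
  obtain ⟨p, q, r, hp, hq, hr, he⟩ := ha
  exact ⟨c • p, c • q, c • r, SMulMemClass.smul_mem c hp, SMulMemClass.smul_mem c hq,
    SMulMemClass.smul_mem c hr, by rw [he]; simp [smul_add, smul_mul_assoc]⟩

theorem NCGen.mul_left {s a : A} (hs : s ∈ Algebra.adjoin ℂ ({V + Vs, W + Ws} : Set A))
    (ha : NCGen V Vs W Ws a) : NCGen V Vs W Ws (s * a) := by
  obtain ⟨p, q, r, hp, hq, hr, he⟩ := ha
  exact ⟨s * p, s * q, s * r, mul_mem hs hp, mul_mem hs hq, mul_mem hs hr,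
    by rw [he]; noncomm_ring⟩

theorem NCGen.congr {a b : A} (h : a = b) (hb : NCGen V Vs W Ws b) : NCGen V Vs W Ws a :=
  h ▸ hb

theorem NCGen.of_smul {c : ℂ} (hc : c ≠ 0) {a : A} (h : NCGen V Vs W Ws (c • a)) :
    NCGen V Vs W Ws a := by
  have := h.smul c⁻¹
  rwa [inv_smul_smul₀ hc] at this

theorem NCGen.xhat : NCGen V Vs W Ws (V - Vs) :=
  ⟨1, 0, 0, one_mem _, zero_mem _, zero_mem _, by simp⟩

theorem NCGen.yhat : NCGen V Vs W Ws (W - Ws) :=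
  ⟨0, 1, 0, zero_mem _, one_mem _, zero_mem _, by simp⟩

theorem NCGen.zhat : NCGen V Vs W Ws (V * Ws - Vs * W) :=
  ⟨0, 0, 1, zero_mem _, zero_mem _, one_mem _, by simp⟩

end NCAux

theorem nc_aux {A : Type*} [Ring A] [Algebra ℂ A] (lam : ℂ) (hlam0 : lam ≠ 0)
    (V Vs W Ws : A)
    (hVVs : V * Vs = 1) (hVsV : Vs * V = 1)
    (hWWs : W * Ws = 1) (hWsW : Ws * W = 1)
    (hcomm : V * W = lam • (W * V)) :
    ∀ m n : ℕ,
      NCGen V Vs W Ws (V ^ m * W ^ n - Vs ^ m * Ws ^ n) ∧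
      NCGen V Vs W Ws (V ^ m * Ws ^ n - Vs ^ m * W ^ n) := by
  -- cancellation lemmas
  have cVVs : ∀ x : A, V * (Vs * x) = x := fun x => by rw [← mul_assoc, hVVs, one_mul]
  have cVsV : ∀ x : A, Vs * (V * x) = x := fun x => by rw [← mul_assoc, hVsV, one_mul]
  have cWWs : ∀ x : A, W * (Ws * x) = x := fun x => by rw [← mul_assoc, hWWs, one_mul]
  have cWsW : ∀ x : A, Ws * (W * x) = x := fun x => by rw [← mul_assoc, hWsW, one_mul]
  -- basic commutations
  have hWV : lam • (W * V) = V * W := hcomm.symm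
  have hWVs : W * Vs = lam • (Vs * W) := by
    have h := congrArg (fun a => Vs * a * Vs) hcomm
    simpa [mul_assoc, cVsV, cVVs, mul_smul_comm, smul_mul_assoc, hVVs, mul_one] using h
  have hWsV : Ws * V = lam • (V * Ws) := by
    have h := congrArg (fun a => Ws * a * Ws) hcomm.symm
    simpa [mul_assoc, cWsW, cWWs, mul_smul_comm, smul_mul_assoc, hWWs, mul_one] using h.symm
  have hWsVs : lam • (Ws * Vs) = Vs * Ws := by
    have h := congrArg (fun a => Vs * a * Vs) hWsV
    simpa [mul_assoc, cVsV, cVVs, mul_smul_comm, smul_mul_assoc, hVVs, mul_one] using h.symm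
  -- power commutations
  have pWV : ∀ m : ℕ, lam ^ m • (W * V ^ m) = V ^ m * W := by
    intro m; induction m with
    | zero => simp
    | succ k ih =>
      rw [pow_succ, pow_succ, ← mul_assoc, mul_comm (lam ^ k) lam, mul_smul,
        ← smul_mul_assoc, ih, mul_assoc, ← mul_smul_comm, hWV, ← mul_assoc]
  have pWVs : ∀ m : ℕ, W * Vs ^ m = lam ^ m • (Vs ^ m * W) := by
    intro m; induction m with
    | zero => simp
    | succ k ih =>
      rw [pow_succ Vs, ← mul_assoc W, ih, smul_mul_assoc, mul_assoc, hWVs,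
        mul_smul_comm, smul_smul, ← mul_assoc, ← pow_succ]
  have pWsV : ∀ m : ℕ, Ws * V ^ m = lam ^ m • (V ^ m * Ws) := by
    intro m; induction m with
    | zero => simp
    | succ k ih =>
      rw [pow_succ V, ← mul_assoc Ws, ih, smul_mul_assoc, mul_assoc, hWsV,
        mul_smul_comm, smul_smul, ← mul_assoc, ← pow_succ]
  have pWsVs : ∀ m : ℕ, lam ^ m • (Ws * Vs ^ m) = Vs ^ m * Ws := by
    intro m; induction m with
    | zero => simp
    | succ k ih =>
      rw [pow_succ, pow_succ, ← mul_assoc, mul_comm (lam ^ k) lam, mul_smul,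
        ← smul_mul_assoc, ih, mul_assoc, ← mul_smul_comm, hWsVs, ← mul_assoc]
  -- membership of generators of the pillow algebra
  have hxP : V + Vs ∈ Algebra.adjoin ℂ ({V + Vs, W + Ws} : Set A) :=
    Algebra.subset_adjoin (Set.mem_insert _ _)
  have hyP : W + Ws ∈ Algebra.adjoin ℂ ({V + Vs, W + Ws} : Set A) :=
    Algebra.subset_adjoin (Set.mem_insert_of_mem _ rfl)
  -- the m-step identities
  have I1 : ∀ m n : ℕ,
      (V + Vs) * (V ^ (m+1) * W ^ n - Vs ^ (m+1) * Ws ^ n)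
        = (V ^ (m+2) * W ^ n - Vs ^ (m+2) * Ws ^ n) + (V ^ m * W ^ n - Vs ^ m * Ws ^ n) := by
    intro m n
    have t1 : V * (V ^ (m+1) * W ^ n) = V ^ (m+2) * W ^ n := by
      rw [← mul_assoc, ← pow_succ']
    have t2 : Vs * (V ^ (m+1) * W ^ n) = V ^ m * W ^ n := by
      rw [pow_succ', mul_assoc, cVsV]
    have t3 : V * (Vs ^ (m+1) * Ws ^ n) = Vs ^ m * Ws ^ n := by
      rw [pow_succ', mul_assoc, cVVs]
    have t4 : Vs * (Vs ^ (m+1) * Ws ^ n) = Vs ^ (m+2) * Ws ^ n := by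
      rw [← mul_assoc, ← pow_succ']
    rw [add_mul, mul_sub, mul_sub, t1, t2, t3, t4]; abel
  have I2 : ∀ m n : ℕ,
      (V + Vs) * (V ^ (m+1) * Ws ^ n - Vs ^ (m+1) * W ^ n)
        = (V ^ (m+2) * Ws ^ n - Vs ^ (m+2) * W ^ n) + (V ^ m * Ws ^ n - Vs ^ m * W ^ n) := by
    intro m n
    have t1 : V * (V ^ (m+1) * Ws ^ n) = V ^ (m+2) * Ws ^ n := by
      rw [← mul_assoc, ← pow_succ']
    have t2 : Vs * (V ^ (m+1) * Ws ^ n) = V ^ m * Ws ^ n := by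
      rw [pow_succ', mul_assoc, cVsV]
    have t3 : V * (Vs ^ (m+1) * W ^ n) = Vs ^ m * W ^ n := by
      rw [pow_succ', mul_assoc, cVVs]
    have t4 : Vs * (Vs ^ (m+1) * W ^ n) = Vs ^ (m+2) * W ^ n := by
      rw [← mul_assoc, ← pow_succ']
    rw [add_mul, mul_sub, mul_sub, t1, t2, t3, t4]; abel
  -- the n-step identities
  have I3 : ∀ m n : ℕ,
      lam ^ m • ((W + Ws) * (V ^ m * W ^ (n+1) - Vs ^ m * Ws ^ (n+1)))
        = (V ^ m * W ^ (n+2) - Vs ^ m * Ws ^ (n+2))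
          + (lam ^ m * lam ^ m) • (V ^ m * W ^ n - Vs ^ m * Ws ^ n) := by
    intro m n
    have u1 : lam ^ m • (W * (V ^ m * W ^ (n+1))) = V ^ m * W ^ (n+2) := by
      rw [← mul_assoc, ← smul_mul_assoc, pWV, mul_assoc, ← pow_succ']
    have u2 : Ws * (V ^ m * W ^ (n+1)) = lam ^ m • (V ^ m * W ^ n) := by
      rw [← mul_assoc, pWsV, smul_mul_assoc, mul_assoc, pow_succ' W n, cWsW]
    have u3 : W * (Vs ^ m * Ws ^ (n+1)) = lam ^ m • (Vs ^ m * Ws ^ n) := by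
      rw [← mul_assoc, pWVs, smul_mul_assoc, mul_assoc, pow_succ' Ws n, cWWs]
    have u4 : lam ^ m • (Ws * (Vs ^ m * Ws ^ (n+1))) = Vs ^ m * Ws ^ (n+2) := by
      rw [← mul_assoc, ← smul_mul_assoc, pWsVs, mul_assoc, ← pow_succ']
    rw [add_mul, mul_sub, mul_sub, smul_add, smul_sub, smul_sub, u1, u2, u3, u4,
      smul_smul, smul_smul]
    module
  have I4 : ∀ m n : ℕ,
      lam ^ m • ((W + Ws) * (V ^ m * Ws ^ (n+1) - Vs ^ m * W ^ (n+1)))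
        = (lam ^ m * lam ^ m) • (V ^ m * Ws ^ (n+2) - Vs ^ m * W ^ (n+2))
          + (V ^ m * Ws ^ n - Vs ^ m * W ^ n) := by
    intro m n
    have v1 : lam ^ m • (W * (V ^ m * Ws ^ (n+1))) = V ^ m * Ws ^ n := by
      rw [← mul_assoc, ← smul_mul_assoc, pWV, mul_assoc, pow_succ' Ws n, cWWs]
    have v2 : Ws * (V ^ m * Ws ^ (n+1)) = lam ^ m • (V ^ m * Ws ^ (n+2)) := by
      rw [← mul_assoc, pWsV, smul_mul_assoc, mul_assoc, ← pow_succ']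
    have v3 : W * (Vs ^ m * W ^ (n+1)) = lam ^ m • (Vs ^ m * W ^ (n+2)) := by
      rw [← mul_assoc, pWVs, smul_mul_assoc, mul_assoc, ← pow_succ']
    have v4 : lam ^ m • (Ws * (Vs ^ m * W ^ (n+1))) = Vs ^ m * W ^ n := by
      rw [← mul_assoc, ← smul_mul_assoc, pWsVs, mul_assoc, pow_succ' W n, cWsW]
    rw [add_mul, mul_sub, mul_sub, smul_add, smul_sub, smul_sub, v1, v2, v3, v4,
      smul_smul, smul_smul]
    module
  -- base cases
  have G00f : NCGen V Vs W Ws (V ^ 0 * W ^ 0 - Vs ^ 0 * Ws ^ 0) :=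
    NCGen.congr (by simp) NCGen.zero
  have G00g : NCGen V Vs W Ws (V ^ 0 * Ws ^ 0 - Vs ^ 0 * W ^ 0) :=
    NCGen.congr (by simp) NCGen.zero
  have G10f : NCGen V Vs W Ws (V ^ 1 * W ^ 0 - Vs ^ 1 * Ws ^ 0) :=
    NCGen.congr (by simp) NCGen.xhat
  have G10g : NCGen V Vs W Ws (V ^ 1 * Ws ^ 0 - Vs ^ 1 * W ^ 0) :=
    NCGen.congr (by simp) NCGen.xhat
  have G01f : NCGen V Vs W Ws (V ^ 0 * W ^ 1 - Vs ^ 0 * Ws ^ 1) :=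
    NCGen.congr (by simp) NCGen.yhat
  have G01g : NCGen V Vs W Ws (V ^ 0 * Ws ^ 1 - Vs ^ 0 * W ^ 1) :=
    ⟨0, -1, 0, zero_mem _, neg_mem (one_mem _), zero_mem _, by
      simp only [pow_zero, pow_one, one_mul]; noncomm_ring⟩
  have G11f : NCGen V Vs W Ws (V ^ 1 * W ^ 1 - Vs ^ 1 * Ws ^ 1) :=
    ⟨0, V + Vs, 1, zero_mem _, hxP, one_mem _, by
      simp only [pow_one]; noncomm_ring⟩
  have G11g : NCGen V Vs W Ws (V ^ 1 * Ws ^ 1 - Vs ^ 1 * W ^ 1) :=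
    NCGen.congr (by simp) NCGen.zhat
  -- the m-step for NCGen
  have stepf : ∀ m n : ℕ, NCGen V Vs W Ws (V ^ m * W ^ n - Vs ^ m * Ws ^ n) →
      NCGen V Vs W Ws (V ^ (m+1) * W ^ n - Vs ^ (m+1) * Ws ^ n) →
      NCGen V Vs W Ws (V ^ (m+2) * W ^ n - Vs ^ (m+2) * Ws ^ n) := fun m n h0 h1 =>
    NCGen.congr (eq_sub_of_add_eq (I1 m n).symm) ((NCGen.mul_left hxP h1).sub h0)
  have stepg : ∀ m n : ℕ, NCGen V Vs W Ws (V ^ m * Ws ^ n - Vs ^ m * W ^ n) →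
      NCGen V Vs W Ws (V ^ (m+1) * Ws ^ n - Vs ^ (m+1) * W ^ n) →
      NCGen V Vs W Ws (V ^ (m+2) * Ws ^ n - Vs ^ (m+2) * W ^ n) := fun m n h0 h1 =>
    NCGen.congr (eq_sub_of_add_eq (I2 m n).symm) ((NCGen.mul_left hxP h1).sub h0)
  -- all m, n ∈ {0,1}
  have base : ∀ m : ℕ,
      (NCGen V Vs W Ws (V ^ m * W ^ 0 - Vs ^ m * Ws ^ 0) ∧
       NCGen V Vs W Ws (V ^ m * Ws ^ 0 - Vs ^ m * W ^ 0) ∧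
       NCGen V Vs W Ws (V ^ m * W ^ 1 - Vs ^ m * Ws ^ 1) ∧
       NCGen V Vs W Ws (V ^ m * Ws ^ 1 - Vs ^ m * W ^ 1)) ∧
      (NCGen V Vs W Ws (V ^ (m+1) * W ^ 0 - Vs ^ (m+1) * Ws ^ 0) ∧
       NCGen V Vs W Ws (V ^ (m+1) * Ws ^ 0 - Vs ^ (m+1) * W ^ 0) ∧
       NCGen V Vs W Ws (V ^ (m+1) * W ^ 1 - Vs ^ (m+1) * Ws ^ 1) ∧
       NCGen V Vs W Ws (V ^ (m+1) * Ws ^ 1 - Vs ^ (m+1) * W ^ 1)) := by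
    intro m; induction m with
    | zero => exact ⟨⟨G00f, G00g, G01f, G01g⟩, ⟨G10f, G10g, G11f, G11g⟩⟩
    | succ k ih =>
      refine ⟨ih.2, ?_, ?_, ?_, ?_⟩
      · exact stepf k 0 ih.1.1 ih.2.1
      · exact stepg k 0 ih.1.2.1 ih.2.2.1
      · exact stepf k 1 ih.1.2.2.1 ih.2.2.2.1
      · exact stepg k 1 ih.1.2.2.2 ih.2.2.2.2
  -- main double induction: fix m, induct on n
  intro m n
  have hc2 : lam ^ m * lam ^ m ≠ 0 :=
    mul_ne_zero (pow_ne_zero _ hlam0) (pow_ne_zero _ hlam0)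
  have K : ∀ n : ℕ,
      (NCGen V Vs W Ws (V ^ m * W ^ n - Vs ^ m * Ws ^ n) ∧
       NCGen V Vs W Ws (V ^ m * Ws ^ n - Vs ^ m * W ^ n)) ∧
      (NCGen V Vs W Ws (V ^ m * W ^ (n+1) - Vs ^ m * Ws ^ (n+1)) ∧
       NCGen V Vs W Ws (V ^ m * Ws ^ (n+1) - Vs ^ m * W ^ (n+1))) := by
    intro n; induction n with
    | zero => exact ⟨⟨(base m).1.1, (base m).1.2.1⟩, ⟨(base m).1.2.2.1, (base m).1.2.2.2⟩⟩
    | succ k ih =>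
      refine ⟨ih.2, ?_, ?_⟩
      · exact NCGen.congr (eq_sub_of_add_eq (I3 m k).symm)
          (((NCGen.mul_left hyP ih.2.1).smul (lam ^ m)).sub (ih.1.1.smul _))
      · refine NCGen.of_smul hc2 ?_
        exact NCGen.congr (eq_sub_of_add_eq (I4 m k).symm)
          (((NCGen.mul_left hyP ih.2.2).smul (lam ^ m)).sub ih.1.2)
  exact (K n).1

/-- the elements `x̂ = V-V*`, `ŷ = W-W*`, `ẑ = VW* - V*W`
generate the odd part `O(T²_θ)₋` (spanned by `VᵐWⁿ - V*ᵐW*ⁿ` and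
`VᵐW*ⁿ - V*ᵐWⁿ`, `m+n > 0`) as a left module over the pillow algebra
`O(P_θ)`, the subalgebra generated by `x = V+V*` and `y = W+W*`. -/
theorem ncTorus_odd_part_generation (A : Type*) [Ring A] [Algebra ℂ A] (θ : ℝ) (lam : ℂ)
    (hlam : lam = Complex.exp (2 * Real.pi * θ * Complex.I))
    (V Vs W Ws : A)
    (hVVs : V * Vs = 1) (hVsV : Vs * V = 1)
    (hWWs : W * Ws = 1) (hWsW : Ws * W = 1)
    (hcomm : V * W = lam • (W * V)) :
    ∀ m n : ℕ, 0 < m + n →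
      (∃ p q r : A,
        p ∈ Algebra.adjoin ℂ ({V + Vs, W + Ws} : Set A) ∧
        q ∈ Algebra.adjoin ℂ ({V + Vs, W + Ws} : Set A) ∧
        r ∈ Algebra.adjoin ℂ ({V + Vs, W + Ws} : Set A) ∧
        V ^ m * W ^ n - Vs ^ m * Ws ^ n
          = p * (V - Vs) + q * (W - Ws) + r * (V * Ws - Vs * W)) ∧
      (∃ p q r : A,
        p ∈ Algebra.adjoin ℂ ({V + Vs, W + Ws} : Set A) ∧
        q ∈ Algebra.adjoin ℂ ({V + Vs, W + Ws} : Set A) ∧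
        r ∈ Algebra.adjoin ℂ ({V + Vs, W + Ws} : Set A) ∧
        V ^ m * Ws ^ n - Vs ^ m * W ^ n
          = p * (V - Vs) + q * (W - Ws) + r * (V * Ws - Vs * W)) := by
  have hlam0 : lam ≠ 0 := by rw [hlam]; exact Complex.exp_ne_zero _
  intro m n _
  exact nc_aux lam hlam0 V Vs W Ws hVVs hVsV hWWs hWsW hcomm m n
end

section
/- Let e = (1/(2(\bar\lambda^2 - 1))) * column(\hat{x},\hat{y},\hat{z}) * row(\hat{x}, \hat{y} - \hat{x} z, -\bar\lambda \hat{z}) be the 3x3 matrix with entries in the noncommutative torus algebra, where \hat{x} = V-V*, \hat{y} = W-W*, \hat{z} = VW*-V*W, z = VW*+V*W. Then e is an idempotent: e^2 = e. -/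
/-- the 3×3 matrix
`e = (1/(2(λ̄²-1))) ⬝ col(x̂,ŷ,ẑ) ⬝ row(x̂, ŷ - x̂z, -λ̄ẑ)`
with entries in the noncommutative torus algebra is an idempotent, where
`x̂ = V-V*`, `ŷ = W-W*`, `ẑ = VW*-V*W`, `z = VW*+V*W`, `λ̄ = λ⁻¹`,
`λ = e^{2πiθ}` and `θ` is irrational. -/
theorem ncTorus_pillow_idempotent (A : Type*) [Ring A] [Algebra ℂ A] (θ : ℝ)
    (hθ : Irrational θ) (lam : ℂ)
    (hlam : lam = Complex.exp (2 * Real.pi * θ * Complex.I))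
    (V Vs W Ws : A)
    (hVVs : V * Vs = 1) (hVsV : Vs * V = 1)
    (hWWs : W * Ws = 1) (hWsW : Ws * W = 1)
    (hcomm : V * W = lam • (W * V))
    (e : Matrix (Fin 3) (Fin 3) A)
    (he : e = fun i j =>
      (2 * (lam⁻¹ ^ 2 - 1))⁻¹ •
        ((![V - Vs, W - Ws, V * Ws - Vs * W] i) *
         (![V - Vs, (W - Ws) - (V - Vs) * (V * Ws + Vs * W),
            -(lam⁻¹ • (V * Ws - Vs * W))] j))) :
    e * e = e := by
  have hlam0 : lam ≠ 0 := by rw [hlam]; exact Complex.exp_ne_zero _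
  -- the scalar `t = 2(λ̄²-1)` is nonzero
  have hlam2 : lam ^ 2 ≠ 1 := by
    intro h
    rw [hlam, ← Complex.exp_nat_mul, Complex.exp_eq_one_iff] at h
    obtain ⟨n, hn⟩ := h
    have hπ : (Real.pi : ℂ) ≠ 0 := by exact_mod_cast Real.pi_ne_zero
    have h3 : (2*(Real.pi:ℂ)*Complex.I) * (2*θ) = (2*(Real.pi:ℂ)*Complex.I) * n := by
      push_cast at hn ⊢; linear_combination hn
    have h4 := mul_left_cancel₀
      (by simp [hπ, Complex.I_ne_zero] : (2*(Real.pi:ℂ)*Complex.I) ≠ 0) h3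
    have h5 : (2*θ : ℝ) = (n : ℝ) := by exact_mod_cast h4
    exact hθ ⟨(n : ℚ)/2, by push_cast; linarith⟩
  have hinv : lam⁻¹ ^ 2 ≠ 1 := by rw [inv_pow]; simpa using hlam2
  have ht : (2 * (lam⁻¹ ^ 2 - 1)) ≠ 0 :=
    mul_ne_zero two_ne_zero (sub_ne_zero.mpr hinv)
  set t : ℂ := 2 * (lam⁻¹ ^ 2 - 1) with hts
  set s : ℂ := t⁻¹ with hss
  -- commutation relations
  have hVVs' : ∀ x : A, V * (Vs * x) = x := fun x => by rw [← mul_assoc, hVVs, one_mul]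
  have hVsV' : ∀ x : A, Vs * (V * x) = x := fun x => by rw [← mul_assoc, hVsV, one_mul]
  have hWWs' : ∀ x : A, W * (Ws * x) = x := fun x => by rw [← mul_assoc, hWWs, one_mul]
  have hWsW' : ∀ x : A, Ws * (W * x) = x := fun x => by rw [← mul_assoc, hWsW, one_mul]
  have hWV : W * V = lam⁻¹ • (V * W) := by
    rw [hcomm, smul_smul, inv_mul_cancel₀ hlam0, one_smul]
  have hWVs : W * Vs = lam • (Vs * W) := by
    have h := congrArg (fun x => Vs * (x * Vs)) hWV
    simp only [mul_assoc, smul_mul_assoc, mul_smul_comm, hVVs, hVsV', mul_one] at h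
    rw [h, smul_smul, mul_inv_cancel₀ hlam0, one_smul]
  have hWsV : Ws * V = lam • (V * Ws) := by
    have h := congrArg (fun x => Ws * (x * Ws)) hcomm
    simp only [mul_assoc, smul_mul_assoc, mul_smul_comm, hWWs, hWsW', mul_one] at h
    exact h
  have hWsVs : Ws * Vs = lam⁻¹ • (Vs * Ws) := by
    have h := congrArg (fun x => Ws * (x * Ws)) hWVs
    simp only [mul_assoc, smul_mul_assoc, mul_smul_comm, hWWs, hWsW', mul_one] at h
    rw [h, smul_smul, inv_mul_cancel₀ hlam0, one_smul]
  have hWV' : ∀ x : A, W * (V * x) = lam⁻¹ • (V * (W * x)) := fun x => by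
    rw [← mul_assoc, hWV, smul_mul_assoc, mul_assoc]
  have hWVs' : ∀ x : A, W * (Vs * x) = lam • (Vs * (W * x)) := fun x => by
    rw [← mul_assoc, hWVs, smul_mul_assoc, mul_assoc]
  have hWsV' : ∀ x : A, Ws * (V * x) = lam • (V * (Ws * x)) := fun x => by
    rw [← mul_assoc, hWsV, smul_mul_assoc, mul_assoc]
  have hWsVs' : ∀ x : A, Ws * (Vs * x) = lam⁻¹ • (Vs * (Ws * x)) := fun x => by
    rw [← mul_assoc, hWsVs, smul_mul_assoc, mul_assoc]
  -- the key "row times column" identity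
  have key : (V - Vs) * (V - Vs)
      + ((W - Ws) - (V - Vs) * (V * Ws + Vs * W)) * (W - Ws)
      + -(lam⁻¹ • (V * Ws - Vs * W)) * (V * Ws - Vs * W)
      = t • (1 : A) := by
    rw [hts]
    simp only [mul_sub, sub_mul, mul_add, add_mul, neg_mul, smul_mul_assoc, mul_smul_comm,
      smul_smul, mul_assoc, hVVs, hVsV, hWWs, hWsW, hWV, hWVs, hWsV, hWsVs,
      hVVs', hVsV', hWWs', hWsW', hWV', hWVs', hWsV', hWsVs', mul_one, one_mul,
      inv_mul_cancel₀ hlam0, mul_inv_cancel₀ hlam0, one_smul, smul_sub, smul_add]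
    module
  -- the main computation for each entry
  have main : ∀ c r : A,
      (s • (c * (V - Vs))) * (s • ((V - Vs) * r))
      + (s • (c * ((W - Ws) - (V - Vs) * (V * Ws + Vs * W)))) * (s • ((W - Ws) * r))
      + (s • (c * -(lam⁻¹ • (V * Ws - Vs * W)))) * (s • ((V * Ws - Vs * W) * r))
      = s • (c * r) := by
    intro c r
    have e1 : ∀ x y : A, (s • (c * x)) * (s • (y * r)) = (s * s) • (c * (x * y) * r) := by
      intro x y
      rw [smul_mul_assoc, mul_smul_comm, smul_smul]
      congr 1
      noncomm_ring
    have e2 : ∀ m0 m1 m2 : A, c * m0 * r + c * m1 * r + c * m2 * r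
        = c * (m0 + m1 + m2) * r := by
      intro m0 m1 m2; noncomm_ring
    rw [e1, e1, e1, ← smul_add, ← smul_add, e2, key, mul_smul_comm, mul_one,
      smul_mul_assoc, smul_smul]
    congr 1
    rw [hss]
    field_simp
  subst he
  ext i j
  refine (Matrix.mul_apply).trans ?_
  simp only [Matrix.mul_apply, Fin.sum_univ_three, Matrix.cons_val_zero, Matrix.cons_val_one,
    Matrix.head_cons, Matrix.cons_val_two, Matrix.tail_cons]
  exact main (![V - Vs, W - Ws, V * Ws - Vs * W] i)
    (![V - Vs, (W - Ws) - (V - Vs) * (V * Ws + Vs * W),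
       -(lam⁻¹ • (V * Ws - Vs * W))] j)
end
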